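/- If for every minimal prime p of Ass_R(N/IN), the p-symbolic topology on N is equivalent to the p-adic topology on N, then the I-symbolic topology on N is equivalent to the I-adic topology on N. -/

import Mathlib

open Ideal

/-- The set of minimal associated primes of an `R`-module `M`. -/
def mAss (R : Type*) [CommRing R] (M : Type*) [AddCommGroup M] [Module R M] : Set (Ideal R) :=
  {p | Minimal (· ∈ associatedPrimes R M) p}

/-- The `n`-th symbolic power of `I` with respect to `N`:
elements `x ∈ N` with `s • x ∈ I ^ n • N` for some `s` outside every minimal prime of
`Ass_R (N / I N)`. -/
def symbPow (R : Type*) [CommRing R] (I : Ideal R) (N : Type*) [AddCommGroup N] [Module R N]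
    (n : ℕ) : Set N :=
  {x | ∃ s : R, (∀ p ∈ mAss R (N ⧸ (I • ⊤ : Submodule R N)), s ∉ p) ∧
    s • x ∈ (I ^ n • ⊤ : Submodule R N)}

/-- The `I`-symbolic topology on `N` is equivalent to the `I`-adic topology on `N`. -/
def symbEquivAdic (R : Type*) [CommRing R] (I : Ideal R) (N : Type*) [AddCommGroup N]
    [Module R N] : Prop :=
  ∀ n : ℕ, ∃ m : ℕ, symbPow R I N m ⊆ (I ^ n • ⊤ : Submodule R N)


universe u v


section Aux

variable {R : Type*} [CommRing R] {M : Type*} [AddCommGroup M] [Module R M]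

/-- Power trick: if `r • x ∈ a • ⊤` for all `x`, then `r ^ n • x ∈ a ^ n • ⊤` for all `x`. -/
lemma pow_smul_mem_pow_smul_top {a : Ideal R} {r : R}
    (h : ∀ x : M, r • x ∈ (a • ⊤ : Submodule R M)) (n : ℕ) :
    ∀ x : M, r ^ n • x ∈ (a ^ n • ⊤ : Submodule R M) := by
  induction n with
  | zero => intro x; simp [Ideal.one_eq_top]
  | succ n ih =>
    intro x
    have key : ∀ y ∈ (a • ⊤ : Submodule R M), r ^ n • y ∈ (a ^ (n + 1) • ⊤ : Submodule R M) := by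
      intro y hy
      have h1 : (a ^ (n + 1) • ⊤ : Submodule R M) = a • (a ^ n • ⊤) := by
        rw [pow_succ', ← smul_eq_mul, Submodule.smul_assoc]
      rw [h1]
      refine Submodule.smul_induction_on hy (fun c hc m _ => ?_) (fun y z hy hz => ?_)
      · rw [smul_comm (r ^ n) c m]
        exact Submodule.smul_mem_smul hc (ih m)
      · rw [smul_add]; exact Submodule.add_mem _ hy hz
    have hx : r ^ (n + 1) • x = r ^ n • (r • x) := by rw [pow_succ, mul_smul]
    rw [hx]
    exact key _ (h x)

/-- Determinant trick: if `r • x ∈ a • ⊤` for every `x` in a finite module `M`,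
then some power of `r` lies in `a ⊔ ann M`. -/
lemma exists_pow_mem_sup_annihilator [Module.Finite R M] (a : Ideal R) (r : R)
    (h : ∀ x : M, r • x ∈ (a • ⊤ : Submodule R M)) :
    ∃ d : ℕ, r ^ d ∈ a ⊔ Module.annihilator R M := by
  have hrange : LinearMap.range (r • (LinearMap.id : M →ₗ[R] M)) ≤ a • ⊤ := by
    rintro y ⟨x, rfl⟩
    exact h x
  obtain ⟨p, hmonic, -, hcoeff, heval⟩ :=
    LinearMap.exists_monic_and_coeff_mem_pow_and_aeval_eq_zero_of_range_le_smul R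
      (r • (LinearMap.id : M →ₗ[R] M)) a hrange
  set d := p.natDegree with hd
  refine ⟨d, ?_⟩
  have hf : (r • (LinearMap.id : M →ₗ[R] M)) = algebraMap R (Module.End R M) r := by
    rw [Module.algebraMap_end_eq_smul_id]
  rw [hf, Polynomial.aeval_algebraMap_apply_eq_algebraMap_eval] at heval
  have hann : p.eval r ∈ Module.annihilator R M := by
    rw [Module.mem_annihilator]
    intro m
    have := congrArg (fun f : Module.End R M => f m) heval
    simpa [Module.algebraMap_end_apply] using this
  have hsum : p.eval r = ∑ i ∈ Finset.range (d + 1), p.coeff i * r ^ i := by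
    rw [Polynomial.eval_eq_sum_range]
  have hlast : p.eval r = (∑ i ∈ Finset.range d, p.coeff i * r ^ i) + r ^ d := by
    rw [hsum, Finset.sum_range_succ, hmonic.coeff_natDegree, one_mul]
  have hsmall : (∑ i ∈ Finset.range d, p.coeff i * r ^ i) ∈ a := by
    refine Ideal.sum_mem _ (fun i hi => ?_)
    rw [Finset.mem_range] at hi
    have : p.coeff i ∈ a ^ (d - i) := hcoeff i
    have hdi : d - i ≠ 0 := Nat.sub_ne_zero_of_lt hi
    exact Ideal.mul_mem_right _ _ (Ideal.pow_le_self hdi this)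
  have : r ^ d = p.eval r - ∑ i ∈ Finset.range d, p.coeff i * r ^ i := by
    rw [hlast]; ring
  rw [this]
  exact Submodule.sub_mem _ (le_sup_right (α := Ideal R) hann)
    (le_sup_left (α := Ideal R) hsmall)

lemma colon_bot_singleton_eq_ann (x : M) :
    (⊥ : Submodule R M).colon {x} = (Submodule.span R {x}).annihilator := by
  ext r
  rw [Submodule.mem_colon_singleton, Submodule.mem_bot, Submodule.mem_annihilator_span_singleton]

lemma mem_associatedPrimes_iff_ann [IsNoetherianRing R] {q : Ideal R} :
    q ∈ associatedPrimes R M ↔ q.IsPrime ∧ ∃ x : M, q = (Submodule.span R {x}).annihilator := by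
  rw [AssociatedPrimes.mem_iff, isAssociatedPrime_iff]
  simp only [colon_bot_singleton_eq_ann]

end Aux


section F1

variable {R : Type*} [CommRing R] {M : Type*} [AddCommGroup M] [Module R M]

lemma isAssociatedPrime_of_mem_minimalPrimes_annihilator [IsNoetherianRing R] [Module.Finite R M]
    {p : Ideal R} (hp : p ∈ (Module.annihilator R M).minimalPrimes) :
    p ∈ associatedPrimes R M := by
  classical
  obtain ⟨⟨hprime, hann⟩, hmin⟩ := hp
  -- the p-power-torsion submodule
  set K : Submodule R M := Submodule.torsion' R M p.primeCompl with hK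
  have hmemK : ∀ x : M, x ∈ K ↔ ∃ s : R, s ∉ p ∧ s • x = 0 := by
    intro x
    constructor
    · rintro ⟨⟨s, hs⟩, h⟩
      exact ⟨s, hs, h⟩
    · rintro ⟨s, hs, h⟩
      exact ⟨⟨s, hs⟩, h⟩
  -- K is saturated
  have hsat : ∀ (s : R) (x : M), s ∉ p → s • x ∈ K → x ∈ K := by
    intro s x hs hsx
    obtain ⟨t, ht, htx⟩ := (hmemK _).mp hsx
    refine (hmemK _).mpr ⟨t * s, fun hmem => ?_, by rw [mul_smul]; exact htx⟩
    rcases hprime.mem_or_mem hmem with h | h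
    · exact ht h
    · exact hs h
  -- K ≠ ⊤
  have hKne : K ≠ ⊤ := by
    intro htop
    obtain ⟨s, hs⟩ := Module.Finite.fg_top (R := R) (M := M)
    have hchoice : ∀ x : {y // y ∈ s}, ∃ t : R, t ∉ p ∧ t • (x : M) = 0 := by
      intro x
      exact (hmemK _).mp (htop ▸ Submodule.mem_top)
    choose t ht1 ht2 using hchoice
    set σ : R := ∏ x ∈ s.attach, t x with hσ
    have hσp : σ ∉ p := by
      intro hmem
      haveI := hprime
      obtain ⟨x, _, hx⟩ := Ideal.IsPrime.prod_mem_iff.mp hmem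
      exact ht1 x hx
    have hσkill : ∀ x ∈ (s : Set M), σ • x = 0 := by
      intro x hx
      have hxs : (⟨x, hx⟩ : {y // y ∈ s}) ∈ s.attach := Finset.mem_attach _ _
      have : σ = t ⟨x, hx⟩ * ∏ y ∈ s.attach.erase ⟨x, hx⟩, t y :=
        (Finset.mul_prod_erase _ _ hxs).symm
      rw [this, mul_comm, mul_smul, ht2 ⟨x, hx⟩, smul_zero]
    have hσann : σ ∈ Module.annihilator R M := by
      rw [Module.mem_annihilator]
      intro m
      have hm : m ∈ Submodule.span R (s : Set M) := hs ▸ Submodule.mem_top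
      refine Submodule.span_induction (fun x hx => hσkill x hx) (smul_zero σ)
        (fun x y _ _ hx hy => by rw [smul_add, hx, hy, add_zero])
        (fun r x _ hx => by rw [smul_comm, hx, smul_zero]) hm
    exact hσp (hann hσann)
  -- pass to M/K, get an associated prime
  have : Nontrivial (M ⧸ K) := by rw [Submodule.Quotient.nontrivial_iff]; exact hKne
  obtain ⟨q, hq⟩ := associatedPrimes.nonempty R (M ⧸ K)
  obtain ⟨hqprime, xb, hxb⟩ := mem_associatedPrimes_iff_ann.mp hq
  obtain ⟨x, rfl⟩ := Submodule.Quotient.mk_surjective K xb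
  -- q ≤ p
  have hx_notK : x ∉ K := by
    intro hxK
    have : (Submodule.Quotient.mk x : M ⧸ K) = 0 := (Submodule.Quotient.mk_eq_zero K).mpr hxK
    rw [this] at hxb
    apply hqprime.ne_top
    rw [hxb, Submodule.span_singleton_eq_bot.mpr rfl, Submodule.annihilator_bot]
  have hqp : q ≤ p := by
    intro c hc
    by_contra hcp
    have hcx : c • (Submodule.Quotient.mk x : M ⧸ K) = 0 := by
      rw [hxb] at hc
      exact (Submodule.mem_annihilator_span_singleton _ _).mp hc
    rw [← Submodule.Quotient.mk_smul, Submodule.Quotient.mk_eq_zero] at hcx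
    exact hx_notK (hsat c x hcp hcx)
  -- ann M ≤ q
  have hannq : Module.annihilator R M ≤ q := by
    intro r hr
    rw [hxb, Submodule.mem_annihilator_span_singleton, ← Submodule.Quotient.mk_smul,
      Module.mem_annihilator.mp hr, Submodule.Quotient.mk_eq_zero]
    exact Submodule.zero_mem K
  have hqeq : q = p := le_antisymm hqp (hmin ⟨hqprime, hannq⟩ hqp)
  -- transfer p from M/K to M
  obtain ⟨G, hG⟩ : p.FG := IsNoetherian.noetherian p
  have hGK : ∀ g : {y // y ∈ G}, ∃ t : R, t ∉ p ∧ t • ((g : R) • x) = 0 := by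
    intro g
    have hgp : (g : R) ∈ p := by
      rw [← hG]; exact Ideal.subset_span g.2
    have : (g : R) • (Submodule.Quotient.mk x : M ⧸ K) = 0 := by
      rw [hqeq] at hxb
      rw [hxb] at hgp
      exact (Submodule.mem_annihilator_span_singleton _ _).mp hgp
    rw [← Submodule.Quotient.mk_smul, Submodule.Quotient.mk_eq_zero] at this
    exact (hmemK _).mp this
  choose t ht1 ht2 using hGK
  set σ : R := ∏ g ∈ G.attach, t g with hσ
  have hσp : σ ∉ p := by
    intro hmem
    haveI := hprime
    obtain ⟨g, _, hg⟩ := Ideal.IsPrime.prod_mem_iff.mp hmem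
    exact ht1 g hg
  set y : M := σ • x with hy
  refine mem_associatedPrimes_iff_ann.mpr ⟨hprime, y, le_antisymm ?_ ?_⟩
  · -- p ≤ ann (R ∙ y)
    rw [← hG, Ideal.span_le]
    intro g hg
    rw [SetLike.mem_coe, Submodule.mem_annihilator_span_singleton]
    have hgG : (⟨g, hg⟩ : {y // y ∈ G}) ∈ G.attach := Finset.mem_attach _ _
    have hσ' : σ = t ⟨g, hg⟩ * ∏ u ∈ G.attach.erase ⟨g, hg⟩, t u :=
      (Finset.mul_prod_erase _ _ hgG).symm
    rw [hy, smul_smul, mul_comm g σ, hσ', mul_comm (t ⟨g, hg⟩), mul_assoc, mul_smul, mul_smul,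
      ht2 ⟨g, hg⟩, smul_zero]
  · -- ann (R ∙ y) ≤ p
    intro c hc
    rw [Submodule.mem_annihilator_span_singleton] at hc
    have : (c * σ) • x = 0 := by rw [mul_smul]; exact hc
    have hmem : c * σ ∈ p := by
      rw [hqeq] at hxb
      rw [hxb, Submodule.mem_annihilator_span_singleton, ← Submodule.Quotient.mk_smul, this]
      exact (Submodule.Quotient.mk_eq_zero K).mpr (Submodule.zero_mem K)
    rcases hprime.mem_or_mem hmem with h | h
    · exact h
    · exact absurd h hσp

end F1



section AR

variable {R : Type u} [CommRing R] {M : Type v} [AddCommGroup M] [Module R M]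

/-- Universe-polymorphic consequence of Artin–Rees: if `K` is killed by `a ^ c`, then
elements of `K` lying in `a ^ t • ⊤` vanish, for `t` large. -/
lemma torsion_inf_pow_smul_eq_zero [IsNoetherianRing R] [Module.Finite R M]
    (a : Ideal R) (K : Submodule R M) (c : ℕ) (hcK : ∀ x ∈ K, ∀ r ∈ a ^ c, r • x = 0) :
    ∃ t : ℕ, ∀ x ∈ K, x ∈ (a ^ t • ⊤ : Submodule R M) → x = 0 := by
  classical
  -- pass to `ULift` to apply the Artin–Rees lemma (which is universe-monomorphic)
  let R' : Type max u v := ULift.{v} R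
  let M' : Type max u v := ULift.{u} M
  let e : R' ≃+* R := ULift.ringEquiv
  haveI : IsNoetherianRing R' := isNoetherianRing_of_ringEquiv R e.symm
  -- `M'` is a finite `R'`-module
  haveI : Module.Finite R' M' := by
    obtain ⟨s, hs⟩ := Module.Finite.fg_top (R := R) (M := M)
    refine ⟨⟨s.image ULift.up, ?_⟩⟩
    rw [eq_top_iff]
    rintro m' -
    have hm : m'.down ∈ Submodule.span R (s : Set M) := hs ▸ Submodule.mem_top
    have key : ∀ x : M, x ∈ Submodule.span R (s : Set M) →
        (ULift.up x : M') ∈ Submodule.span R' ((s.image ULift.up : Finset M') : Set M') := by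
      intro x hx
      refine Submodule.span_induction (fun y hy => Submodule.subset_span ?_) ?_ ?_ ?_ hx
      · simp only [Finset.coe_image, Set.mem_image, Finset.mem_coe]
        exact ⟨y, hy, rfl⟩
      · exact Submodule.zero_mem _
      · intro y z _ _ hy hz
        exact Submodule.add_mem _ hy hz
      · intro r y _ hy
        have hsm : (ULift.up (r • y) : M') = (ULift.up r : R') • ULift.up y := rfl
        rw [hsm]
        exact Submodule.smul_mem _ _ hy
    have := key m'.down hm
    simpa using this
  -- transfer the ideal and the submodule
  have ha' : ∀ (n : ℕ) (r' : R'), r' ∈ (Ideal.comap (e : R' →+* R) a) ^ n ↔ r'.down ∈ a ^ n := by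
    intro n r'
    have hmap : Ideal.map (e : R' →+* R) ((Ideal.comap (e : R' →+* R) a) ^ n) = a ^ n := by
      rw [Ideal.map_pow, Ideal.map_comap_of_surjective (e : R' →+* R) e.surjective]
    constructor
    · intro h
      have h2 : (e : R' →+* R) r' ∈ Ideal.map (e : R' →+* R)
          ((Ideal.comap (e : R' →+* R) a) ^ n) := Ideal.mem_map_of_mem _ h
      rw [hmap] at h2
      exact h2
    · intro h
      have h2 : r' ∈ Ideal.comap (e : R' →+* R) (a ^ n) := h
      rw [← hmap, Ideal.comap_map_of_bijective (e : R' →+* R) e.bijective] at h2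
      exact h2
  let a' : Ideal R' := Ideal.comap (e : R' →+* R) a
  let K' : Submodule R' M' :=
    { carrier := {m' : M' | m'.down ∈ K}
      add_mem' := fun h1 h2 => K.add_mem h1 h2
      zero_mem' := K.zero_mem
      smul_mem' := fun r' m' h => K.smul_mem r'.down h }
  have hupmem : ∀ (n : ℕ) (y : M), y ∈ (a ^ n • ⊤ : Submodule R M) →
      (ULift.up y : M') ∈ (a' ^ n • ⊤ : Submodule R' M') := by
    intro n y hy
    refine Submodule.smul_induction_on hy (fun r hr m _ => ?_) (fun y z hy' hz' => ?_)
    · have hsm : (ULift.up (r • m) : M') = (ULift.up r : R') • ULift.up m := rfl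
      rw [hsm]
      exact Submodule.smul_mem_smul ((ha' n (ULift.up r)).mpr hr) Submodule.mem_top
    · have hsm : (ULift.up (y + z) : M') = ULift.up y + ULift.up z := rfl
      rw [hsm]
      exact Submodule.add_mem _ hy' hz'
  obtain ⟨k, hk⟩ := Ideal.exists_pow_inf_eq_pow_smul a' K'
  refine ⟨k + c, fun x hxK hxt => ?_⟩
  have hup : (ULift.up x : M') ∈ (a' ^ (k + c) • ⊤ ⊓ K' : Submodule R' M') :=
    ⟨hupmem _ x hxt, hxK⟩
  rw [hk (k + c) (Nat.le_add_right k c)] at hup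
  have hbot : (a' ^ (k + c - k) • (a' ^ k • ⊤ ⊓ K') : Submodule R' M') ≤ ⊥ := by
    refine Submodule.smul_le.mpr fun r' hr' m' hm' => ?_
    have hkc : k + c - k = c := by omega
    rw [hkc] at hr'
    have h1 : r'.down ∈ a ^ c := (ha' c r').mp hr'
    have h2 : (r' • m').down = 0 := hcK m'.down hm'.2 r'.down h1
    rw [Submodule.mem_bot]
    exact ULift.ext _ _ h2
  have := hbot hup
  rw [Submodule.mem_bot] at this
  exact congrArg ULift.down this

end AR



section LemB

variable {R : Type u} [CommRing R] [IsNoetherianRing R]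

/-- If every associated prime of `M` contains some prime in the list `L`, then the intersection
of the `p ^ t`-multiples over `p ∈ L` is eventually zero. -/
lemma eventually_inf_pow_smul_eq_bot (L : List (Ideal R)) :
    ∀ (M : Type v) [AddCommGroup M] [Module R M] [Module.Finite R M],
      (∀ q ∈ associatedPrimes R M, ∃ p ∈ L, p ≤ q) →
      ∃ t : ℕ, ∀ x : M, (∀ p ∈ L, x ∈ (p ^ t • ⊤ : Submodule R M)) → x = 0 := by
  induction L with
  | nil =>
    intro M _ _ _ hyp
    rcases subsingleton_or_nontrivial M with hs | hn
    · exact ⟨0, fun x _ => Subsingleton.elim x 0⟩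
    · obtain ⟨q, hq⟩ := associatedPrimes.nonempty R M
      obtain ⟨p, hp, -⟩ := hyp q hq
      exact absurd hp (List.not_mem_nil (a := p))
  | cons a L ih =>
    intro M _ _ _ hyp
    -- the `a`-power-torsion chain
    have hmono : Monotone (fun n : ℕ => Submodule.torsionBySet R M ((a ^ n : Ideal R) : Set R)) := by
      intro n m hnm
      exact Submodule.torsionBySet_le_torsionBySet_of_subset
        (fun r hr => Ideal.pow_le_pow_right hnm hr)
    obtain ⟨c, hc⟩ := monotone_stabilizes_iff_noetherian.mpr
      (inferInstance : IsNoetherian R M)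
      ⟨fun n : ℕ => Submodule.torsionBySet R M ((a ^ n : Ideal R) : Set R), hmono⟩
    set K : Submodule R M := Submodule.torsionBySet R M ((a ^ c : Ideal R) : Set R) with hKdef
    have hmemK : ∀ x : M, x ∈ K ↔ ∀ r ∈ a ^ c, r • x = 0 := by
      intro x
      rw [hKdef, Submodule.mem_torsionBySet_iff]
      exact ⟨fun h r hr => h ⟨r, hr⟩, fun h r => h r r.2⟩
    -- K absorbs: a • x ⊆ K implies x ∈ K
    have hKabs : ∀ x : M, (∀ α ∈ a, α • x ∈ K) → x ∈ K := by
      intro x hx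
      have hx1 : x ∈ Submodule.torsionBySet R M ((a ^ (c + 1) : Ideal R) : Set R) := by
        rw [Submodule.mem_torsionBySet_iff]
        rintro ⟨r, hr⟩
        have : a ^ (c + 1) ≤ (Submodule.span R {x}).annihilator := by
          rw [pow_succ, Ideal.mul_le]
          intro r hr s hs
          rw [Submodule.mem_annihilator_span_singleton, mul_smul]
          exact (hmemK _).mp (hx s hs) r hr
        exact (Submodule.mem_annihilator_span_singleton _ _).mp (this hr)
      have := hc (c + 1) (Nat.le_succ c)
      dsimp at this
      rw [hKdef, this]
      exact hx1
    -- associated primes of M ⧸ K land in L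
    have hass : ∀ q ∈ associatedPrimes R (M ⧸ K), ∃ p ∈ L, p ≤ q := by
      intro q hq
      obtain ⟨hqprime, xb, hxb⟩ := mem_associatedPrimes_iff_ann.mp hq
      obtain ⟨x, rfl⟩ := Submodule.Quotient.mk_surjective K xb
      have hxnot : x ∉ K := by
        intro hxK
        apply hqprime.ne_top
        rw [hxb, ((Submodule.Quotient.mk_eq_zero K).mpr hxK : _),
          Submodule.span_singleton_eq_bot.mpr rfl, Submodule.annihilator_bot]
      have haq : ¬ a ≤ q := by
        intro haq
        apply hxnot
        apply hKabs
        intro α hα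
        have : α • (Submodule.Quotient.mk x : M ⧸ K) = 0 :=
          (Submodule.mem_annihilator_span_singleton _ _).mp (hxb ▸ haq hα)
        rwa [← Submodule.Quotient.mk_smul, Submodule.Quotient.mk_eq_zero] at this
      -- q is an associated prime of M
      obtain ⟨u, hua, huq⟩ := SetLike.not_le_iff_exists.mp haq
      have hqM : q ∈ associatedPrimes R M := by
        refine mem_associatedPrimes_iff_ann.mpr ⟨hqprime, u ^ c • x, le_antisymm ?_ ?_⟩
        · intro r hr
          rw [Submodule.mem_annihilator_span_singleton]
          have hrx : r • x ∈ K := by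
            have : r • (Submodule.Quotient.mk x : M ⧸ K) = 0 :=
              (Submodule.mem_annihilator_span_singleton _ _).mp (hxb ▸ hr)
            rwa [← Submodule.Quotient.mk_smul, Submodule.Quotient.mk_eq_zero] at this
          rw [smul_comm]
          exact (hmemK _).mp hrx (u ^ c) (Ideal.pow_mem_pow hua c)
        · intro r hr
          rw [Submodule.mem_annihilator_span_singleton] at hr
          have : (r * u ^ c) • x = 0 := by rw [mul_smul]; exact hr
          have hmem : r * u ^ c ∈ q := by
            rw [hxb, Submodule.mem_annihilator_span_singleton, ← Submodule.Quotient.mk_smul, this]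
            exact (Submodule.Quotient.mk_eq_zero K).mpr (Submodule.zero_mem K)
          rcases hqprime.mem_or_mem hmem with h | h
          · exact h
          · exact absurd (hqprime.mem_of_pow_mem c h) huq
      obtain ⟨p, hp, hpq⟩ := hyp q hqM
      rcases List.mem_cons.mp hp with rfl | hpL
      · exact absurd hpq haq
      · exact ⟨p, hpL, hpq⟩
    haveI : Module.Finite R (M ⧸ K) := Module.Finite.quotient R K
    obtain ⟨t₁, ht₁⟩ := @ih (M ⧸ K) _ _ _ hass
    obtain ⟨t₂, ht₂⟩ := torsion_inf_pow_smul_eq_zero a K c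
      (fun x hx r hr => (hmemK x).mp hx r hr)
    set t := max t₁ t₂ with htdef
    refine ⟨t, fun x hx => ?_⟩
    have hxK : x ∈ K := by
      have hmk : (Submodule.Quotient.mk x : M ⧸ K) = 0 := by
        apply ht₁
        intro p hp
        have hxp : x ∈ (p ^ t • ⊤ : Submodule R M) := hx p (List.mem_cons_of_mem a hp)
        have hle : (p ^ t • ⊤ : Submodule R M) ≤ p ^ t₁ • ⊤ :=
          Submodule.smul_mono_left (Ideal.pow_le_pow_right (le_max_left _ _))
        have hmem : (Submodule.Quotient.mk x : M ⧸ K) ∈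
            Submodule.map (Submodule.mkQ K) (p ^ t₁ • ⊤ : Submodule R M) :=
          Submodule.mem_map_of_mem (hle hxp)
        rwa [Submodule.map_smul'', Submodule.map_top, Submodule.range_mkQ] at hmem
      rwa [Submodule.Quotient.mk_eq_zero] at hmk
    refine ht₂ x hxK ?_
    have hxa : x ∈ (a ^ t • ⊤ : Submodule R M) := hx a (List.mem_cons_self)
    exact Submodule.smul_mono_left (Ideal.pow_le_pow_right (le_max_right _ _)) hxa

end LemB
section Main

variable {R : Type*} [CommRing R] {M : Type*} [AddCommGroup M] [Module R M]

/-- Membership in the annihilator of `M ⧸ a • ⊤`. -/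
lemma mem_annihilator_quotient_smul_top {a : Ideal R} {r : R} :
    r ∈ Module.annihilator R (M ⧸ (a • ⊤ : Submodule R M)) ↔
      ∀ x : M, r • x ∈ (a • ⊤ : Submodule R M) := by
  rw [Module.mem_annihilator]
  constructor
  · intro h x
    have := h (Submodule.Quotient.mk x)
    rwa [← Submodule.Quotient.mk_smul, Submodule.Quotient.mk_eq_zero] at this
  · intro h xb
    obtain ⟨x, rfl⟩ := Submodule.Quotient.mk_surjective _ xb
    rw [← Submodule.Quotient.mk_smul, Submodule.Quotient.mk_eq_zero]
    exact h x

lemma minimalPrimes_finite [IsNoetherianRing R] (J : Ideal R) : J.minimalPrimes.Finite := by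
  rw [Ideal.minimalPrimes_eq_comap]
  exact (minimalPrimes.finite_of_isNoetherianRing (R ⧸ J)).image _

/-- For a finite module over a Noetherian ring, the minimal associated primes are exactly
the minimal primes over the annihilator. -/
lemma mAss_eq_minimalPrimes [IsNoetherianRing R] [Module.Finite R M] :
    mAss R M = (Module.annihilator R M).minimalPrimes := by
  ext p
  constructor
  · intro hp
    have hprime : p.IsPrime := hp.1.isPrime
    have hAnn : Module.annihilator R M ≤ p := by
      rw [← Submodule.annihilator_top]
      exact hp.1.annihilator_le
    refine ⟨⟨hprime, hAnn⟩, ?_⟩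
    intro q hq hqp
    haveI := hq.1
    obtain ⟨p₀, hp₀min, hp₀q⟩ := Ideal.exists_minimalPrimes_le hq.2
    have hp₀ass : p₀ ∈ associatedPrimes R M :=
      isAssociatedPrime_of_mem_minimalPrimes_annihilator hp₀min
    exact le_trans (hp.2 hp₀ass (le_trans hp₀q hqp)) hp₀q
  · intro hp
    refine ⟨isAssociatedPrime_of_mem_minimalPrimes_annihilator hp, ?_⟩
    intro q hq hqp
    refine hp.2 ⟨hq.isPrime, ?_⟩ hqp
    rw [← Submodule.annihilator_top]
    exact hq.annihilator_le

end Main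

theorem stmt6 (R : Type*) [CommRing R] [IsNoetherianRing R] (I : Ideal R)
    (N : Type*) [AddCommGroup N] [Module R N] [Module.Finite R N] [Nontrivial N]
    (hI : (I • ⊤ : Submodule R N) ≠ ⊤)
    (h : ∀ p ∈ mAss R (N ⧸ (I • ⊤ : Submodule R N)), symbEquivAdic R p N) :
    symbEquivAdic R I N := by
  classical
  intro n
  set A := Module.annihilator R (N ⧸ (I • ⊤ : Submodule R N)) with hAdef
  have hIA : I ≤ A := fun r hr =>
    mem_annihilator_quotient_smul_top.mpr fun x => Submodule.smul_mem_smul hr Submodule.mem_top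
  have hannA : Module.annihilator R N ≤ A := fun r hr =>
    mem_annihilator_quotient_smul_top.mpr fun x => by
      rw [Module.mem_annihilator.mp hr x]; exact Submodule.zero_mem _
  have hS : mAss R (N ⧸ (I • ⊤ : Submodule R N)) = A.minimalPrimes := mAss_eq_minimalPrimes
  have Sfin : (mAss R (N ⧸ (I • ⊤ : Submodule R N))).Finite := by
    rw [hS]; exact minimalPrimes_finite A
  set L : List (Ideal R) := Sfin.toFinset.toList with hLdef
  have hLmem : ∀ p : Ideal R, p ∈ L ↔ p ∈ mAss R (N ⧸ (I • ⊤ : Submodule R N)) := by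
    intro p
    rw [hLdef, Finset.mem_toList, Set.Finite.mem_toFinset]
  -- every associated prime of N ⧸ Iⁿ•⊤ contains a minimal associated prime of N ⧸ I•⊤
  have hyp : ∀ q ∈ associatedPrimes R (N ⧸ (I ^ n • ⊤ : Submodule R N)), ∃ p ∈ L, p ≤ q := by
    intro q hq
    haveI hqprime : q.IsPrime := hq.isPrime
    have hAq : A ≤ q := by
      intro r hr
      have h1 : ∀ x : N, r • x ∈ (I • ⊤ : Submodule R N) :=
        mem_annihilator_quotient_smul_top.mp hr
      have h2 : r ^ n ∈ Module.annihilator R (N ⧸ (I ^ n • ⊤ : Submodule R N)) :=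
        mem_annihilator_quotient_smul_top.mpr (pow_smul_mem_pow_smul_top h1 n)
      have h3 : Module.annihilator R (N ⧸ (I ^ n • ⊤ : Submodule R N)) ≤ q := by
        rw [← Submodule.annihilator_top]
        exact hq.annihilator_le
      exact hqprime.mem_of_pow_mem n (h3 h2)
    obtain ⟨p, hpmin, hpq⟩ := Ideal.exists_minimalPrimes_le hAq
    exact ⟨p, (hLmem p).mpr (hS ▸ hpmin), hpq⟩
  obtain ⟨t, ht⟩ := eventually_inf_pow_smul_eq_bot L (N ⧸ (I ^ n • ⊤ : Submodule R N)) hyp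
  -- choose exponents for each minimal associated prime
  set f : Ideal R → ℕ := fun p =>
    if hp : p ∈ mAss R (N ⧸ (I • ⊤ : Submodule R N)) then (h p hp t).choose else 0 with hfdef
  set m : ℕ := Sfin.toFinset.sup f with hmdef
  refine ⟨m, fun x hx => ?_⟩
  obtain ⟨s, hs, hsx⟩ := hx
  -- for each minimal associated prime p, x ∈ pᵗ • ⊤
  have hxp : ∀ p ∈ mAss R (N ⧸ (I • ⊤ : Submodule R N)), x ∈ (p ^ t • ⊤ : Submodule R N) := by
    intro p hp
    have hpprime : p.IsPrime := hp.1.isPrime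
    have hAp : A ≤ p := (hS ▸ hp).1.2
    -- the only minimal associated prime of N ⧸ p•⊤ is p itself
    have hq' : ∀ q ∈ mAss R (N ⧸ (p • ⊤ : Submodule R N)), q = p := by
      have hpB : p ≤ Module.annihilator R (N ⧸ (p • ⊤ : Submodule R N)) := fun r hr =>
        mem_annihilator_quotient_smul_top.mpr fun y => Submodule.smul_mem_smul hr Submodule.mem_top
      have hBp : Module.annihilator R (N ⧸ (p • ⊤ : Submodule R N)) ≤ p := by
        intro r hr
        obtain ⟨d, hd⟩ :=
          exists_pow_mem_sup_annihilator p r (mem_annihilator_quotient_smul_top.mp hr)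
        have hle : p ⊔ Module.annihilator R N ≤ p := sup_le le_rfl (le_trans hannA hAp)
        exact hpprime.mem_of_pow_mem d (hle hd)
      have hpmin' : p ∈ (Module.annihilator R (N ⧸ (p • ⊤ : Submodule R N))).minimalPrimes :=
        ⟨⟨hpprime, hBp⟩, fun q hq _ => le_trans hpB hq.2⟩
      have hpass : p ∈ associatedPrimes R (N ⧸ (p • ⊤ : Submodule R N)) :=
        isAssociatedPrime_of_mem_minimalPrimes_annihilator hpmin'
      intro q hq
      have hpq : p ≤ q := by
        refine le_trans hpB ?_
        rw [← Submodule.annihilator_top]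
        exact hq.1.annihilator_le
      exact le_antisymm (hq.2 hpass hpq) hpq
    -- x belongs to the symbolic power of p
    have hfp : f p = (h p hp t).choose := dif_pos hp
    have hfpm : f p ≤ m := by
      rw [hmdef]
      exact Finset.le_sup (Set.Finite.mem_toFinset Sfin |>.mpr hp)
    have hsx' : s • x ∈ (p ^ f p • ⊤ : Submodule R N) := by
      have hle : (I ^ m • ⊤ : Submodule R N) ≤ p ^ f p • ⊤ :=
        Submodule.smul_mono_left
          (le_trans (Ideal.pow_le_pow_right hfpm) (Ideal.pow_right_mono (le_trans hIA hAp) _))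
      exact hle hsx
    have hxsymb : x ∈ symbPow R p N (f p) :=
      ⟨s, fun q hq => (hq' q hq) ▸ hs p hp, hsx'⟩
    rw [hfp] at hxsymb
    exact (h p hp t).choose_spec hxsymb
  -- conclude via the intersection lemma
  have hmk : (Submodule.Quotient.mk x : N ⧸ (I ^ n • ⊤ : Submodule R N)) = 0 := by
    apply ht
    intro p hpL
    have hp := (hLmem p).mp hpL
    have hmem : (Submodule.Quotient.mk x : N ⧸ (I ^ n • ⊤ : Submodule R N)) ∈
        Submodule.map (Submodule.mkQ _) (p ^ t • ⊤ : Submodule R N) :=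
      Submodule.mem_map_of_mem (hxp p hp)
    rwa [Submodule.map_smul'', Submodule.map_top, Submodule.range_mkQ] at hmem
  rwa [Submodule.Quotient.mk_eq_zero] at hmk
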